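/- Let p be an odd prime and fix a non-square ε ∈ 𝔽_p^×. The normalizer of the nonsplit Cartan subgroup C_ns(p) in GL₂(𝔽_p) is exactly C_ns(p) ∪ { [[a, bε],[-b, -a]] : (a,b) ∈ 𝔽_p² \ {(0,0)} }, i.e. it equals C_ns(p) ∪ [[1,0],[0,-1]]·C_ns(p). -/

import Mathlib

open Matrix

abbrev GL2 (p : ℕ) := GL (Fin 2) (ZMod p)

/-- The subgroup `SL₂` of `GL₂(ℤ/nℤ)`, i.e. the kernel of the determinant. -/
def SL2sub (n : ℕ) : Subgroup (GL (Fin 2) (ZMod n)) :=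
  (Matrix.GeneralLinearGroup.det : GL (Fin 2) (ZMod n) →* (ZMod n)ˣ).ker

/-- The split Cartan subgroup: diagonal matrices in `GL₂(𝔽_p)`. -/
def Cs (p : ℕ) : Subgroup (GL2 p) where
  carrier := { g | (g : Matrix (Fin 2) (Fin 2) (ZMod p)) 0 1 = 0 ∧
      (g : Matrix (Fin 2) (Fin 2) (ZMod p)) 1 0 = 0 }
  one_mem' := by simp
  mul_mem' := by
    rintro a b ⟨ha1, ha2⟩ ⟨hb1, hb2⟩
    refine ⟨?_, ?_⟩ <;>
      simp [Units.val_mul, Matrix.mul_apply, Fin.sum_univ_two, ha1, ha2, hb1, hb2]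
  inv_mem' := by
    rintro a ⟨h1, h2⟩
    have h : ((a⁻¹ : GL2 p) : Matrix (Fin 2) (Fin 2) (ZMod p))
        = Ring.inverse ((a : Matrix (Fin 2) (Fin 2) (ZMod p)).det) •
          Matrix.adjugate (a : Matrix (Fin 2) (Fin 2) (ZMod p)) := by
      rw [Matrix.coe_units_inv, Matrix.inv_def]
    refine ⟨?_, ?_⟩ <;> simp [h, Matrix.adjugate_fin_two, h1, h2]

/-- The Borel subgroup: upper triangular matrices in `GL₂(𝔽_p)`. -/
def B0 (p : ℕ) : Subgroup (GL2 p) where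
  carrier := { g | (g : Matrix (Fin 2) (Fin 2) (ZMod p)) 1 0 = 0 }
  one_mem' := by simp
  mul_mem' := by
    intro a b ha hb
    simp only [Set.mem_setOf_eq] at *
    simp [Units.val_mul, Matrix.mul_apply, Fin.sum_univ_two, ha, hb]
  inv_mem' := by
    intro a h
    simp only [Set.mem_setOf_eq] at *
    have hh : ((a⁻¹ : GL2 p) : Matrix (Fin 2) (Fin 2) (ZMod p))
        = Ring.inverse ((a : Matrix (Fin 2) (Fin 2) (ZMod p)).det) •
          Matrix.adjugate (a : Matrix (Fin 2) (Fin 2) (ZMod p)) := by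
      rw [Matrix.coe_units_inv, Matrix.inv_def]
    simp [hh, Matrix.adjugate_fin_two, h]

/-- The subgroup of scalar matrices in `GL₂(𝔽_p)`. -/
def Zs (p : ℕ) : Subgroup (GL2 p) where
  carrier := { g | (g : Matrix (Fin 2) (Fin 2) (ZMod p)) 0 1 = 0 ∧
      (g : Matrix (Fin 2) (Fin 2) (ZMod p)) 1 0 = 0 ∧
      (g : Matrix (Fin 2) (Fin 2) (ZMod p)) 1 1 = (g : Matrix (Fin 2) (Fin 2) (ZMod p)) 0 0 }
  one_mem' := by simp
  mul_mem' := by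
    rintro a b ⟨ha1, ha2, ha3⟩ ⟨hb1, hb2, hb3⟩
    refine ⟨?_, ?_, ?_⟩ <;>
      simp [Units.val_mul, Matrix.mul_apply, Fin.sum_univ_two, ha1, ha2, ha3, hb1, hb2, hb3]
  inv_mem' := by
    rintro a ⟨h1, h2, h3⟩
    have hh : ((a⁻¹ : GL2 p) : Matrix (Fin 2) (Fin 2) (ZMod p))
        = Ring.inverse ((a : Matrix (Fin 2) (Fin 2) (ZMod p)).det) •
          Matrix.adjugate (a : Matrix (Fin 2) (Fin 2) (ZMod p)) := by
      rw [Matrix.coe_units_inv, Matrix.inv_def]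
    refine ⟨?_, ?_, ?_⟩ <;> simp [hh, Matrix.adjugate_fin_two, h1, h2, h3]

/-- The normalizer of the split Cartan subgroup: diagonal and antidiagonal matrices. -/
def Ns (p : ℕ) : Subgroup (GL2 p) where
  carrier := { g | ((g : Matrix (Fin 2) (Fin 2) (ZMod p)) 0 1 = 0 ∧
      (g : Matrix (Fin 2) (Fin 2) (ZMod p)) 1 0 = 0) ∨
      ((g : Matrix (Fin 2) (Fin 2) (ZMod p)) 0 0 = 0 ∧
      (g : Matrix (Fin 2) (Fin 2) (ZMod p)) 1 1 = 0) }
  one_mem' := by simp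
  mul_mem' := by
    rintro a b (⟨ha1, ha2⟩ | ⟨ha1, ha2⟩) (⟨hb1, hb2⟩ | ⟨hb1, hb2⟩)
    · refine Or.inl ⟨?_, ?_⟩ <;>
        simp [Units.val_mul, Matrix.mul_apply, Fin.sum_univ_two, ha1, ha2, hb1, hb2]
    · refine Or.inr ⟨?_, ?_⟩ <;>
        simp [Units.val_mul, Matrix.mul_apply, Fin.sum_univ_two, ha1, ha2, hb1, hb2]
    · refine Or.inr ⟨?_, ?_⟩ <;>
        simp [Units.val_mul, Matrix.mul_apply, Fin.sum_univ_two, ha1, ha2, hb1, hb2]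
    · refine Or.inl ⟨?_, ?_⟩ <;>
        simp [Units.val_mul, Matrix.mul_apply, Fin.sum_univ_two, ha1, ha2, hb1, hb2]
  inv_mem' := by
    intro a h
    have hh : ((a⁻¹ : GL2 p) : Matrix (Fin 2) (Fin 2) (ZMod p))
        = Ring.inverse ((a : Matrix (Fin 2) (Fin 2) (ZMod p)).det) •
          Matrix.adjugate (a : Matrix (Fin 2) (Fin 2) (ZMod p)) := by
      rw [Matrix.coe_units_inv, Matrix.inv_def]
    rcases h with ⟨h1, h2⟩ | ⟨h1, h2⟩
    · refine Or.inl ⟨?_, ?_⟩ <;> simp [hh, Matrix.adjugate_fin_two, h1, h2]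
    · refine Or.inr ⟨?_, ?_⟩ <;> simp [hh, Matrix.adjugate_fin_two, h1, h2]

/-- The nonsplit Cartan subgroup attached to a nonsquare `ε`:
invertible matrices of the form `[[a, bε], [b, a]]`. -/
def Cns (p : ℕ) (ε : ZMod p) : Subgroup (GL2 p) where
  carrier := { g | (g : Matrix (Fin 2) (Fin 2) (ZMod p)) 1 1 =
      (g : Matrix (Fin 2) (Fin 2) (ZMod p)) 0 0 ∧
      (g : Matrix (Fin 2) (Fin 2) (ZMod p)) 0 1 = ε * (g : Matrix (Fin 2) (Fin 2) (ZMod p)) 1 0 }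
  one_mem' := by simp
  mul_mem' := by
    rintro a b ⟨ha1, ha2⟩ ⟨hb1, hb2⟩
    refine ⟨?_, ?_⟩ <;>
      simp [Units.val_mul, Matrix.mul_apply, Fin.sum_univ_two, ha1, ha2, hb1, hb2] <;>
      try ring
  inv_mem' := by
    rintro a ⟨h1, h2⟩
    have hh : ((a⁻¹ : GL2 p) : Matrix (Fin 2) (Fin 2) (ZMod p))
        = Ring.inverse ((a : Matrix (Fin 2) (Fin 2) (ZMod p)).det) •
          Matrix.adjugate (a : Matrix (Fin 2) (Fin 2) (ZMod p)) := by
      rw [Matrix.coe_units_inv, Matrix.inv_def]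
    refine ⟨?_, ?_⟩ <;> simp [hh, Matrix.adjugate_fin_two, h1, h2] <;> try ring

/-- The normalizer of the nonsplit Cartan subgroup:
matrices `[[a, bε], [b, a]]` together with matrices `[[a, bε], [-b, -a]]`. -/
def Nns (p : ℕ) (ε : ZMod p) : Subgroup (GL2 p) where
  carrier := { g | ((g : Matrix (Fin 2) (Fin 2) (ZMod p)) 1 1 =
      (g : Matrix (Fin 2) (Fin 2) (ZMod p)) 0 0 ∧
      (g : Matrix (Fin 2) (Fin 2) (ZMod p)) 0 1 = ε * (g : Matrix (Fin 2) (Fin 2) (ZMod p)) 1 0) ∨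
      ((g : Matrix (Fin 2) (Fin 2) (ZMod p)) 1 1 =
      -(g : Matrix (Fin 2) (Fin 2) (ZMod p)) 0 0 ∧
      (g : Matrix (Fin 2) (Fin 2) (ZMod p)) 0 1 =
        -(ε * (g : Matrix (Fin 2) (Fin 2) (ZMod p)) 1 0)) }
  one_mem' := by simp
  mul_mem' := by
    rintro a b (⟨ha1, ha2⟩ | ⟨ha1, ha2⟩) (⟨hb1, hb2⟩ | ⟨hb1, hb2⟩)
    · refine Or.inl ⟨?_, ?_⟩ <;>
        simp [Units.val_mul, Matrix.mul_apply, Fin.sum_univ_two, ha1, ha2, hb1, hb2] <;>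
        try ring
    · refine Or.inr ⟨?_, ?_⟩ <;>
        simp [Units.val_mul, Matrix.mul_apply, Fin.sum_univ_two, ha1, ha2, hb1, hb2] <;>
        try ring
    · refine Or.inr ⟨?_, ?_⟩ <;>
        simp [Units.val_mul, Matrix.mul_apply, Fin.sum_univ_two, ha1, ha2, hb1, hb2] <;>
        try ring
    · refine Or.inl ⟨?_, ?_⟩ <;>
        simp [Units.val_mul, Matrix.mul_apply, Fin.sum_univ_two, ha1, ha2, hb1, hb2] <;>
        try ring
  inv_mem' := by
    intro a h
    have hh : ((a⁻¹ : GL2 p) : Matrix (Fin 2) (Fin 2) (ZMod p))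
        = Ring.inverse ((a : Matrix (Fin 2) (Fin 2) (ZMod p)).det) •
          Matrix.adjugate (a : Matrix (Fin 2) (Fin 2) (ZMod p)) := by
      rw [Matrix.coe_units_inv, Matrix.inv_def]
    rcases h with ⟨h1, h2⟩ | ⟨h1, h2⟩
    · refine Or.inl ⟨?_, ?_⟩ <;> simp [hh, Matrix.adjugate_fin_two, h1, h2] <;> try ring
    · refine Or.inr ⟨?_, ?_⟩ <;> simp [hh, Matrix.adjugate_fin_two, h1, h2] <;> try ring
/-- The matrix `γ = [[1,1],[0,1]]` as an element of `GL₂(𝔽_p)`. -/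
def gam (p : ℕ) : GL2 p where
  val := !![1, 1; 0, 1]
  inv := !![1, -1; 0, 1]
  val_inv := by
    ext i j
    fin_cases i <;> fin_cases j <;>
      simp [Matrix.mul_apply, Fin.sum_univ_two, Matrix.one_apply]
  inv_val := by
    ext i j
    fin_cases i <;> fin_cases j <;>
      simp [Matrix.mul_apply, Fin.sum_univ_two, Matrix.one_apply]

/-- The diagonal matrix `diag(a, 1)` as an element of `GL₂(𝔽_p)`. -/
def dMat (p : ℕ) (a : (ZMod p)ˣ) : GL2 p where
  val := !![(a : ZMod p), 0; 0, 1]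
  inv := !![((a⁻¹ : (ZMod p)ˣ) : ZMod p), 0; 0, 1]
  val_inv := by
    ext i j
    fin_cases i <;> fin_cases j <;>
      simp [Matrix.mul_apply, Fin.sum_univ_two, Matrix.one_apply, ← Units.val_mul]
  inv_val := by
    ext i j
    fin_cases i <;> fin_cases j <;>
      simp [Matrix.mul_apply, Fin.sum_univ_two, Matrix.one_apply, ← Units.val_mul]

/-- `a ↦ diag(a, 1)` as a group homomorphism `𝔽_p^× → GL₂(𝔽_p)`. -/
def dHom (p : ℕ) : (ZMod p)ˣ →* GL2 p where
  toFun := dMat p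
  map_one' := by
    refine Units.ext ?_
    simp only [dMat]
    ext i j
    fin_cases i <;> fin_cases j <;> simp [Matrix.one_apply]
  map_mul' := by
    intro a b
    refine Units.ext ?_
    simp only [dMat, Units.val_mul]
    ext i j
    fin_cases i <;> fin_cases j <;> simp [Matrix.mul_apply, Fin.sum_univ_two]

/-- The semi-Cartan power subgroup `D^k = { diag(a^k, 1) : a ∈ 𝔽_p^× }`. -/
def Dpow (p k : ℕ) : Subgroup (GL2 p) :=
  ((dHom p).comp (powMonoidHom k)).range

/-- The diagonal matrix `diag(1, a)` as an element of `GL₂(𝔽_p)`. -/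
def dMatF (p : ℕ) (a : (ZMod p)ˣ) : GL2 p where
  val := !![1, 0; 0, (a : ZMod p)]
  inv := !![1, 0; 0, ((a⁻¹ : (ZMod p)ˣ) : ZMod p)]
  val_inv := by
    ext i j
    fin_cases i <;> fin_cases j <;>
      simp [Matrix.mul_apply, Fin.sum_univ_two, Matrix.one_apply, ← Units.val_mul]
  inv_val := by
    ext i j
    fin_cases i <;> fin_cases j <;>
      simp [Matrix.mul_apply, Fin.sum_univ_two, Matrix.one_apply, ← Units.val_mul]

/-- `a ↦ diag(1, a)` as a group homomorphism `𝔽_p^× → GL₂(𝔽_p)`. -/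
def dHomF (p : ℕ) : (ZMod p)ˣ →* GL2 p where
  toFun := dMatF p
  map_one' := by
    refine Units.ext ?_
    simp only [dMatF]
    ext i j
    fin_cases i <;> fin_cases j <;> simp [Matrix.one_apply]
  map_mul' := by
    intro a b
    refine Units.ext ?_
    simp only [dMatF, Units.val_mul]
    ext i j
    fin_cases i <;> fin_cases j <;> simp [Matrix.mul_apply, Fin.sum_univ_two]

/-- The flip `(D^k)_f = { diag(1, a^k) : a ∈ 𝔽_p^× }` of the semi-Cartan power subgroup. -/
def DpowF (p k : ℕ) : Subgroup (GL2 p) :=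
  ((dHomF p).comp (powMonoidHom k)).range

/-- Any two elements of the nonsplit Cartan subgroup commute. -/
lemma cns_comm {p : ℕ} {ε : ZMod p} {a b : GL2 p} (ha : a ∈ Cns p ε) (hb : b ∈ Cns p ε) :
    a * b = b * a := by
  obtain ⟨ha1, ha2⟩ := ha
  obtain ⟨hb1, hb2⟩ := hb
  refine Units.ext ?_
  ext i j
  fin_cases i <;> fin_cases j <;>
    · simp only [Units.val_mul]
      simp [Matrix.mul_apply, Fin.sum_univ_two, ha1, ha2, hb1, hb2]
      ring

/-- The subgroup `C_ns(p)^k` of `k`-th powers of elements of the nonsplit Cartan subgroup. -/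
def CnsPow (p : ℕ) (ε : ZMod p) (k : ℕ) : Subgroup (GL2 p) where
  carrier := { g | ∃ x ∈ Cns p ε, x ^ k = g }
  one_mem' := ⟨1, (Cns p ε).one_mem, one_pow k⟩
  mul_mem' := by
    rintro a b ⟨x, hx, rfl⟩ ⟨y, hy, rfl⟩
    exact ⟨x * y, (Cns p ε).mul_mem hx hy,
      Commute.mul_pow (cns_comm hx hy) k⟩
  inv_mem' := by
    rintro a ⟨x, hx, rfl⟩
    exact ⟨x⁻¹, (Cns p ε).inv_mem hx, by rw [inv_pow]⟩

/-- The conjugate subgroup `m H m⁻¹`. -/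
def conjSub {p : ℕ} (m : GL2 p) (H : Subgroup (GL2 p)) : Subgroup (GL2 p) :=
  Subgroup.map (MulAut.conj m).toMonoidHom H

/-- The matrix `w = diag(1, -1)` as an element of `GL₂(𝔽_p)`. -/
def wMat (p : ℕ) : GL2 p where
  val := !![1, 0; 0, -1]
  inv := !![1, 0; 0, -1]
  val_inv := by
    ext i j
    fin_cases i <;> fin_cases j <;>
      simp [Matrix.mul_apply, Fin.sum_univ_two, Matrix.one_apply]
  inv_val := by
    ext i j
    fin_cases i <;> fin_cases j <;>
      simp [Matrix.mul_apply, Fin.sum_univ_two, Matrix.one_apply]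

/-- The matrix `J = [[0, ε], [1, 0]]` as an element of `GL₂(𝔽_p)`, for `ε ≠ 0`. -/
def jMat (p : ℕ) [Fact p.Prime] (ε : ZMod p) (hε0 : ε ≠ 0) : GL2 p where
  val := !![0, ε; 1, 0]
  inv := !![0, 1; ε⁻¹, 0]
  val_inv := by
    ext i j
    fin_cases i <;> fin_cases j <;>
      simp [Matrix.mul_apply, Fin.sum_univ_two, Matrix.one_apply, mul_inv_cancel₀ hε0]
  inv_val := by
    ext i j
    fin_cases i <;> fin_cases j <;>
      simp [Matrix.mul_apply, Fin.sum_univ_two, Matrix.one_apply, inv_mul_cancel₀ hε0]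

/-- Conjugation by an element of `Nns` preserves the nonsplit Cartan. -/
lemma key18 {p : ℕ} {ε : ZMod p} {g : GL2 p} (hg : g ∈ Nns p ε)
    {n : GL2 p} (hn : n ∈ Cns p ε) : g * n * g⁻¹ ∈ Cns p ε := by
  obtain ⟨hn1, hn2⟩ := hn
  rcases hg with ⟨hg1, hg2⟩ | ⟨hg1, hg2⟩
  · have h : g * n = n * g := cns_comm ⟨hg1, hg2⟩ ⟨hn1, hn2⟩
    rw [h, mul_inv_cancel_right]
    exact ⟨hn1, hn2⟩
  · have h : g * n = (wMat p * n * wMat p) * g := by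
      refine Units.ext ?_
      ext i j
      fin_cases i <;> fin_cases j <;>
        · simp only [Units.val_mul, wMat]
          simp [Matrix.mul_apply, Fin.sum_univ_two, Matrix.vecMul, dotProduct,
            hg1, hg2, hn1, hn2]
          ring
    rw [h, mul_inv_cancel_right]
    refine ⟨?_, ?_⟩ <;>
      · simp only [Units.val_mul, wMat]
        simp [Matrix.mul_apply, Fin.sum_univ_two, Matrix.vecMul, dotProduct, hn1, hn2]

theorem stmt18 (p : ℕ) [Fact p.Prime] (hp2 : p ≠ 2)
    (ε : ZMod p) (hε : ∀ x : ZMod p, x ^ 2 ≠ ε) :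
    Subgroup.normalizer (Cns p ε : Set (GL2 p)) = Nns p ε := by
  have hε0 : ε ≠ 0 := fun h => hε 0 (by simp [h])
  have h2 : (2 : ZMod p) ≠ 0 := by
    intro h
    have : (p : ℕ) ∣ 2 := by
      have := (ZMod.natCast_eq_zero_iff 2 p).mp (by exact_mod_cast h)
      exact this
    exact hp2 ((Nat.prime_dvd_prime_iff_eq (Fact.out) Nat.prime_two).mp this)
  ext g
  constructor
  · intro hg
    set J := jMat p ε hε0 with hJdef
    have hJ : J ∈ Cns p ε := by
      refine ⟨?_, ?_⟩ <;> simp [hJdef, jMat]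
    have hkmem : g * J * g⁻¹ ∈ Cns p ε := (Subgroup.mem_normalizer_iff.mp hg J).mp hJ
    obtain ⟨hk1, hk2⟩ := hkmem
    set k := g * J * g⁻¹ with hkdef
    -- trace of k equals trace of J
    have hinv : ((g⁻¹ : GL2 p) : Matrix (Fin 2) (Fin 2) (ZMod p)) *
        (g : Matrix (Fin 2) (Fin 2) (ZMod p)) = 1 := by
      rw [← Units.val_mul, inv_mul_cancel, Units.val_one]
    have htr : ((k : Matrix (Fin 2) (Fin 2) (ZMod p))).trace
        = ((J : Matrix (Fin 2) (Fin 2) (ZMod p))).trace := by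
      rw [hkdef, Units.val_mul, Units.val_mul, Matrix.trace_mul_comm,
        ← Matrix.mul_assoc, hinv, Matrix.one_mul]
    have hdet : ((k : Matrix (Fin 2) (Fin 2) (ZMod p))).det
        = ((J : Matrix (Fin 2) (Fin 2) (ZMod p))).det := by
      have hu : IsUnit ((g : Matrix (Fin 2) (Fin 2) (ZMod p))) := by
        exact g.isUnit
      rw [hkdef, Units.val_mul, Units.val_mul, Matrix.coe_units_inv,
        Matrix.det_conj hu]
    -- deduce k 0 0 = 0
    have hx : (k : Matrix (Fin 2) (Fin 2) (ZMod p)) 0 0 = 0 := by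
      rw [Matrix.trace_fin_two, Matrix.trace_fin_two, hk1] at htr
      have : (2 : ZMod p) * (k : Matrix (Fin 2) (Fin 2) (ZMod p)) 0 0 = 0 := by
        rw [two_mul, htr]
        simp [hJdef, jMat]
      rcases mul_eq_zero.mp this with h | h
      · exact absurd h h2
      · exact h
    -- deduce (k 1 0)^2 = 1
    set y := (k : Matrix (Fin 2) (Fin 2) (ZMod p)) 1 0 with hy
    have hy2 : y = 1 ∨ y = -1 := by
      rw [Matrix.det_fin_two, Matrix.det_fin_two, hk1, hk2, hx] at hdet
      simp only [hJdef, jMat] at hdet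
      norm_num at hdet
      have hfac : ε * ((y - 1) * (y + 1)) = 0 := by
        linear_combination hdet
      rcases mul_eq_zero.mp hfac with h | h
      · exact absurd h hε0
      · rcases mul_eq_zero.mp h with h | h
        · exact Or.inl (by linear_combination h)
        · exact Or.inr (by linear_combination h)
    -- equations from k * g = g * J
    have hkg : k * g = g * J := by rw [hkdef, inv_mul_cancel_right]
    have e10 : y * (g : Matrix (Fin 2) (Fin 2) (ZMod p)) 0 0
        = (g : Matrix (Fin 2) (Fin 2) (ZMod p)) 1 1 := by
      have h := congrArg (fun u : GL2 p => (u : Matrix (Fin 2) (Fin 2) (ZMod p)) 1 0) hkg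
      simp only [Units.val_mul, hJdef, jMat] at h
      simp [Matrix.mul_apply, Fin.sum_univ_two, hk1, hx, ← hy] at h
      linear_combination h
    have e11 : y * (g : Matrix (Fin 2) (Fin 2) (ZMod p)) 0 1
        = ε * (g : Matrix (Fin 2) (Fin 2) (ZMod p)) 1 0 := by
      have h := congrArg (fun u : GL2 p => (u : Matrix (Fin 2) (Fin 2) (ZMod p)) 1 1) hkg
      simp only [Units.val_mul, hJdef, jMat] at h
      simp [Matrix.mul_apply, Fin.sum_univ_two, hk1, hx, ← hy] at h
      linear_combination h
    rcases hy2 with h | h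
    · rw [h] at e10 e11
      exact Or.inl ⟨by linear_combination -e10, by linear_combination e11⟩
    · rw [h] at e10 e11
      exact Or.inr ⟨by linear_combination -e10, by linear_combination -e11⟩
  · intro hg
    rw [Subgroup.mem_normalizer_iff]
    intro n
    constructor
    · intro hn
      exact key18 hg hn
    · intro hn
      have h := key18 ((Nns p ε).inv_mem hg) hn
      have : g⁻¹ * (g * n * g⁻¹) * g⁻¹⁻¹ = n := by group
      rwa [this] at h
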